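/- Let S be a metric space with countable topological base τ_b and let P_n, P be Borel probability measures on S. Suppose (a) P_n(O) → P(O) for each finite intersection O of elements of τ_b, and (b) for each closed set C ⊆ S there exist measurable sets B_1, B_2, ... ⊆ C with C = ∪_j B_j and lim_n P_n(∩_{j=1}^k B_{i_j}) = P(∩_{j=1}^k B_{i_j}) for every finite subcollection {B_{i_1}, ..., B_{i_k}}. Then P_n converges setwise to P, i.e., P_n(E) → P(E) for all Borel E. -/

import Mathlib

open MeasureTheory Filter Topology Set
open scoped ENNReal

private lemma biInter_fin {S : Type*} (A : ℕ → Set S) (s : Finset ℕ) (hs : s.Nonempty) :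
    ∃ (k : ℕ) (idx : Fin (k + 1) → ℕ), (⋂ m, A (idx m)) = ⋂ j ∈ s, A j := by
  obtain ⟨k, hk⟩ : ∃ k, s.card = k + 1 :=
    ⟨s.card - 1, (Nat.succ_pred_eq_of_pos (Finset.card_pos.2 hs)).symm⟩
  refine ⟨k, fun m => (s.orderIsoOfFin hk m : ℕ), ?_⟩
  ext x
  simp only [Set.mem_iInter]
  constructor
  · intro h j hj
    obtain ⟨m, hm⟩ := (s.orderIsoOfFin hk).surjective ⟨j, hj⟩
    have := h m
    rw [hm] at this
    exact this
  · intro h m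
    exact h _ (s.orderIsoOfFin hk m).2

private lemma tendsto_finU {S : Type*} [MeasurableSpace S]
    (P : ℕ → Measure S) (Q : Measure S)
    (hP : ∀ n, IsProbabilityMeasure (P n)) (hQ : IsProbabilityMeasure Q)
    (A : ℕ → Set S) (hA : ∀ j, MeasurableSet (A j))
    (h : ∀ (k : ℕ) (idx : Fin (k + 1) → ℕ),
      Tendsto (fun n => P n (⋂ m, A (idx m))) atTop (𝓝 (Q (⋂ m, A (idx m)))))
    (F : Finset (Finset ℕ)) (hF : ∀ s ∈ F, s.Nonempty) :
    Tendsto (fun n => P n (⋃ s ∈ F, ⋂ j ∈ s, A j)) atTop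
      (𝓝 (Q (⋃ s ∈ F, ⋂ j ∈ s, A j))) := by
  have hI : ∀ s : Finset ℕ, s.Nonempty →
      Tendsto (fun n => P n (⋂ j ∈ s, A j)) atTop (𝓝 (Q (⋂ j ∈ s, A j))) := by
    intro s hs
    obtain ⟨k, idx, hidx⟩ := biInter_fin A s hs
    rw [← hidx]
    exact h k idx
  have key : ∀ N : ℕ, ∀ F : Finset (Finset ℕ), F.card ≤ N → (∀ s ∈ F, s.Nonempty) →
      Tendsto (fun n => P n (⋃ s ∈ F, ⋂ j ∈ s, A j)) atTop
        (𝓝 (Q (⋃ s ∈ F, ⋂ j ∈ s, A j))) := by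
    intro N
    induction N with
    | zero =>
      intro F hcard _
      rw [Finset.card_eq_zero.1 (Nat.le_zero.1 hcard)]
      simp only [Finset.notMem_empty, Set.iUnion_of_empty, Set.iUnion_empty, measure_empty]
      exact tendsto_const_nhds
    | succ N ih =>
      intro F hcard hFne
      rcases F.eq_empty_or_nonempty with rfl | ⟨s, hs⟩
      · simp only [Finset.notMem_empty, Set.iUnion_of_empty, Set.iUnion_empty, measure_empty]
        exact tendsto_const_nhds
      · set F' := F.erase s with hF'
        have hcard' : F'.card ≤ N := by
          have h2 : F'.card < F.card := by
            rw [hF']; exact Finset.card_erase_lt_of_mem hs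
          omega
        have hFne' : ∀ t ∈ F', t.Nonempty := fun t ht => hFne t (Finset.mem_of_mem_erase ht)
        have hU : (⋃ t ∈ F, ⋂ j ∈ t, A j)
            = (⋂ j ∈ s, A j) ∪ ⋃ t ∈ F', ⋂ j ∈ t, A j := by
          conv_lhs => rw [← Finset.insert_erase hs]
          rw [Finset.set_biUnion_insert]
        set Is : Set S := ⋂ j ∈ s, A j with hIsd
        set V : Set S := ⋃ t ∈ F', ⋂ j ∈ t, A j with hVd
        have hVm : MeasurableSet V := Finset.measurableSet_biUnion _
          (fun t _ => Finset.measurableSet_biInter _ (fun j _ => hA j))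
        have hIV : Is ∩ V = ⋃ t ∈ F'.image (fun t => s ∪ t), ⋂ j ∈ t, A j := by
          rw [hIsd, hVd]
          ext x
          simp only [Set.mem_inter_iff, Set.mem_iUnion, Set.mem_iInter, Finset.mem_image,
            Finset.mem_union, exists_prop, exists_exists_and_eq_and]
          constructor
          · rintro ⟨hx1, t, ht, hx2⟩
            exact ⟨t, ht, fun j hj => hj.elim (hx1 j) (hx2 j)⟩
          · rintro ⟨t, ht, hx⟩
            exact ⟨fun j hj => hx j (Or.inl hj), t, ht, fun j hj => hx j (Or.inr hj)⟩
        have himg_card : (F'.image (fun t => s ∪ t)).card ≤ N :=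
          le_trans Finset.card_image_le hcard'
        have himg_ne : ∀ t ∈ F'.image (fun t => s ∪ t), t.Nonempty := by
          rintro t ht
          obtain ⟨u, _, rfl⟩ := Finset.mem_image.1 ht
          exact (hFne s hs).mono Finset.subset_union_left
        have tV := ih F' hcard' hFne'
        have tW := ih _ himg_card himg_ne
        rw [← hIV] at tW
        have tIs := hI s (hFne s hs)
        have heq : ∀ (μ : Measure S), IsProbabilityMeasure μ →
            μ (Is ∪ V) = (μ Is + μ V) - μ (Is ∩ V) := by
          intro μ hμ
          have := measure_union_add_inter (μ := μ) Is hVm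
          exact ENNReal.eq_sub_of_add_eq (measure_ne_top μ _) this
        have : Tendsto (fun n => (P n Is + P n V) - P n (Is ∩ V)) atTop
            (𝓝 ((Q Is + Q V) - Q (Is ∩ V))) :=
          ENNReal.Tendsto.sub (tIs.add tV) tW (Or.inr (measure_ne_top Q _))
        rw [hU, heq Q hQ]
        exact this.congr (fun n => (heq (P n) (hP n)).symm)
  exact key F.card F le_rfl hF

private lemma le_liminf_iUnion {S : Type*} [MeasurableSpace S]
    (P : ℕ → Measure S) (Q : Measure S)
    (hP : ∀ n, IsProbabilityMeasure (P n)) (hQ : IsProbabilityMeasure Q)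
    (A : ℕ → Set S) (hA : ∀ j, MeasurableSet (A j))
    (h : ∀ (k : ℕ) (idx : Fin (k + 1) → ℕ),
      Tendsto (fun n => P n (⋂ m, A (idx m))) atTop (𝓝 (Q (⋂ m, A (idx m))))) :
    Q (⋃ j, A j) ≤ liminf (fun n => P n (⋃ j, A j)) atTop := by
  have hsN : ∀ N : ℕ, Tendsto (fun n => P n (⋃ j ∈ Finset.range N, A j)) atTop
      (𝓝 (Q (⋃ j ∈ Finset.range N, A j))) := by
    intro N
    have heq : (⋃ s ∈ (Finset.range N).image ({·} : ℕ → Finset ℕ), ⋂ j ∈ s, A j)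
        = ⋃ j ∈ Finset.range N, A j := by
      ext x
      simp [Finset.mem_image]
    have := tendsto_finU P Q hP hQ A hA h ((Finset.range N).image ({·} : ℕ → Finset ℕ))
      (by rintro t ht; obtain ⟨j, _, rfl⟩ := Finset.mem_image.1 ht; exact Finset.singleton_nonempty j)
    rwa [heq] at this
  have hmono : Monotone (fun N => ⋃ j ∈ Finset.range N, A j) := by
    intro a b hab
    exact Set.biUnion_subset_biUnion_left (fun j hj => Finset.mem_range.2
      (lt_of_lt_of_le (Finset.mem_range.1 hj) hab))
  have hUeq : (⋃ N, ⋃ j ∈ Finset.range N, A j) = ⋃ j, A j := by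
    ext x
    simp only [Set.mem_iUnion, Finset.mem_range, exists_prop]
    exact ⟨fun ⟨N, j, _, hx⟩ => ⟨j, hx⟩, fun ⟨j, hx⟩ => ⟨j + 1, j, Nat.lt_succ_self j, hx⟩⟩
  have hlim : Tendsto (fun N => Q (⋃ j ∈ Finset.range N, A j)) atTop (𝓝 (Q (⋃ j, A j))) := by
    have := tendsto_measure_iUnion_atTop (μ := Q) hmono
    rwa [hUeq] at this
  refine le_of_tendsto hlim (Filter.Eventually.of_forall fun N => ?_)
  rw [← (hsN N).liminf_eq]
  exact liminf_le_liminf (Filter.Eventually.of_forall fun n =>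
    measure_mono (Set.iUnion₂_subset fun j _ => Set.subset_iUnion A j))

theorem stmt10 {S : Type*} [MetricSpace S] [MeasurableSpace S] [BorelSpace S]
    (τb : Set (Set S)) (hcount : τb.Countable)
    (hbasis : TopologicalSpace.IsTopologicalBasis τb)
    (P : ℕ → Measure S) (Q : Measure S)
    (hP : ∀ n, IsProbabilityMeasure (P n)) (hQ : IsProbabilityMeasure Q)
    (hbase : ∀ (k : ℕ) (O : Fin (k + 1) → Set S), (∀ i, O i ∈ τb) →
      Tendsto (fun n => P n (⋂ i, O i)) atTop (𝓝 (Q (⋂ i, O i))))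
    (hclosed : ∀ C : Set S, IsClosed C → ∃ Bj : ℕ → Set S,
      (∀ j, MeasurableSet (Bj j)) ∧ (∀ j, Bj j ⊆ C) ∧ C = ⋃ j, Bj j ∧
      ∀ (k : ℕ) (idx : Fin (k + 1) → ℕ),
        Tendsto (fun n => P n (⋂ m, Bj (idx m))) atTop (𝓝 (Q (⋂ m, Bj (idx m))))) :
    ∀ E : Set S, MeasurableSet E → Tendsto (fun n => P n E) atTop (𝓝 (Q E)) := by
  -- liminf lower bound for closed sets
  have hlc : ∀ C : Set S, IsClosed C → Q C ≤ liminf (fun n => P n C) atTop := by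
    intro C hC
    obtain ⟨B, hBm, _, hCeq, hBlim⟩ := hclosed C hC
    rw [hCeq]
    exact le_liminf_iUnion P Q hP hQ B hBm hBlim
  -- liminf lower bound for all measurable sets via inner regularity
  have hli : ∀ E : Set S, MeasurableSet E → Q E ≤ liminf (fun n => P n E) atTop := by
    intro E hE
    refine ENNReal.le_of_forall_pos_le_add fun ε hε _ => ?_
    obtain ⟨C, hCE, hCc, hlt⟩ := hE.exists_isClosed_lt_add (measure_ne_top Q E)
      (ε := ε) (by exact_mod_cast hε.ne')
    calc Q E ≤ Q C + ε := hlt.le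
      _ ≤ liminf (fun n => P n C) atTop + ε := add_le_add_left (hlc C hCc) _
      _ ≤ liminf (fun n => P n E) atTop + ε := by
          gcongr
          exact liminf_le_liminf (Filter.Eventually.of_forall fun n => measure_mono hCE)
  intro E hE
  refine tendsto_of_le_liminf_of_limsup_le (hli E hE) ?_
  -- limsup upper bound via complements
  have h1 : ∀ n, P n E = 1 - P n Eᶜ := by
    intro n
    have := prob_compl_eq_one_sub (μ := P n) hE.compl
    rwa [compl_compl] at this
  have h2 : limsup (fun n => P n E) atTop = 1 - liminf (fun n => P n Eᶜ) atTop := by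
    calc limsup (fun n => P n E) atTop = limsup (fun n => (1 : ℝ≥0∞) - P n Eᶜ) atTop := by
          congr 1; funext n; exact h1 n
      _ = 1 - liminf (fun n => P n Eᶜ) atTop :=
          ENNReal.limsup_const_sub atTop _ ENNReal.one_ne_top
  rw [h2]
  have h3 : Q Eᶜ ≤ liminf (fun n => P n Eᶜ) atTop := hli Eᶜ hE.compl
  calc 1 - liminf (fun n => P n Eᶜ) atTop ≤ 1 - Q Eᶜ := tsub_le_tsub_left h3 1
    _ = Q E := by
        rw [prob_compl_eq_one_sub (μ := Q) hE]
        exact ENNReal.sub_sub_cancel ENNReal.one_ne_top prob_le_one
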